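/- For a probability density p on (0,∞) with finite mean, the operator T preserves the mean: M₁(T[p]) = M₁(p). -/

import Mathlib

open MeasureTheory Real Set
open scoped ENNReal

namespace TMeanAux

/-- The ENNReal-valued tail integral `∫_u^∞ p v / v dv`. -/
noncomputable def Qe (p : ℝ → ℝ) (u : ℝ) : ℝ≥0∞ :=
  ∫⁻ v in Ioi u, ENNReal.ofReal (p v / v)

variable {p : ℝ → ℝ}

lemma Qe_anti : Antitone (Qe p) := fun _ _ h => lintegral_mono_set (Ioi_subset_Ioi h)

lemma Qe_meas : Measurable (Qe p) := Qe_anti.measurable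

lemma Qe_ne_top (hm : Measurable p) (hnn : ∀ x, 0 ≤ p x)
    (h1 : ∫⁻ x in Ioi (0:ℝ), ENNReal.ofReal (p x) = 1) {u : ℝ} (hu : 0 < u) :
    Qe p u ≠ ∞ := by
  have hG : Measurable fun v => ENNReal.ofReal u⁻¹ * ENNReal.ofReal (p v) :=
    (hm.ennreal_ofReal).const_mul _
  have hb : Qe p u ≤ ENNReal.ofReal u⁻¹ * 1 := by
    rw [← h1]
    calc Qe p u ≤ ∫⁻ v in Ioi u, ENNReal.ofReal u⁻¹ * ENNReal.ofReal (p v) := by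
          refine setLIntegral_mono hG fun v hv => ?_
          rw [← ENNReal.ofReal_mul (by positivity)]
          refine ENNReal.ofReal_le_ofReal ?_
          rw [div_eq_inv_mul]
          refine mul_le_mul_of_nonneg_right ?_ (hnn v)
          exact inv_anti₀ hu (le_of_lt hv)
      _ = ENNReal.ofReal u⁻¹ * ∫⁻ v in Ioi u, ENNReal.ofReal (p v) :=
          lintegral_const_mul _ hm.ennreal_ofReal
      _ ≤ ENNReal.ofReal u⁻¹ * ∫⁻ v in Ioi 0, ENNReal.ofReal (p v) :=
          mul_le_mul_right (lintegral_mono_set (Ioi_subset_Ioi hu.le)) _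
  exact ne_top_of_le_ne_top (by simp) hb

/-- Generic Tonelli swap for `∫_0^∞ f(u) Q(u) du`. -/
lemma swap_aux (hm : Measurable p) {f : ℝ → ℝ≥0∞} (hf : Measurable f) :
    ∫⁻ u in Ioi (0:ℝ), f u * Qe p u
      = ∫⁻ v in Ioi (0:ℝ), (∫⁻ u in Ioo 0 v, f u) * ENNReal.ofReal (p v / v) := by
  have hG : Measurable fun v => ENNReal.ofReal (p v / v) :=
    (hm.div measurable_id).ennreal_ofReal
  calc ∫⁻ u in Ioi (0:ℝ), f u * Qe p u
      = ∫⁻ u in Ioi (0:ℝ), ∫⁻ v in Ioi (0:ℝ),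
          (Ioi u).indicator (fun v => f u * ENNReal.ofReal (p v / v)) v := by
        refine setLIntegral_congr_fun measurableSet_Ioi
          (fun u hu => ?_)
        have hset : Ioi u ∩ Ioi 0 = Ioi u :=
          inter_eq_left.mpr fun y hy => show (0:ℝ) < y from lt_trans hu hy
        rw [setLIntegral_indicator measurableSet_Ioi, hset, lintegral_const_mul _ hG]
        rfl
    _ = ∫⁻ v in Ioi (0:ℝ), ∫⁻ u in Ioi (0:ℝ),
          (Ioi u).indicator (fun v => f u * ENNReal.ofReal (p v / v)) v := by
        refine lintegral_lintegral_swap ?_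
        refine Measurable.aemeasurable ?_
        have heq : (Function.uncurry fun u v =>
              (Ioi u).indicator (fun v => f u * ENNReal.ofReal (p v / v)) v)
            = fun q : ℝ × ℝ => ({q : ℝ × ℝ | q.1 < q.2}).indicator
              (fun q => f q.1 * ENNReal.ofReal (p q.2 / q.2)) q := by
          funext q
          simp only [Function.uncurry, indicator_apply, mem_Ioi, mem_setOf_eq]
        rw [heq]
        exact Measurable.indicator
          ((hf.comp measurable_fst).mul
            (((hm.comp measurable_snd).div measurable_snd).ennreal_ofReal))
          (measurableSet_lt measurable_fst measurable_snd)
    _ = ∫⁻ v in Ioi (0:ℝ), (∫⁻ u in Ioo 0 v, f u) * ENNReal.ofReal (p v / v) := by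
        refine setLIntegral_congr_fun measurableSet_Ioi
          (fun v _ => ?_)
        have heq : (fun u => (Ioi u).indicator
              (fun v => f u * ENNReal.ofReal (p v / v)) v)
            = fun u => (Iio v).indicator f u * ENNReal.ofReal (p v / v) := by
          funext u
          simp only [indicator_apply, mem_Ioi, mem_Iio]
          by_cases h : u < v <;> simp [h]
        have hset : Iio v ∩ Ioi 0 = Ioo 0 v := by
          ext y
          simp only [mem_inter_iff, mem_Iio, mem_Ioi, mem_Ioo]
          exact and_comm
        rw [heq, lintegral_mul_const' _ _ ENNReal.ofReal_ne_top,
          setLIntegral_indicator measurableSet_Iio, hset]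

lemma Q_total (hm : Measurable p)
    (h1 : ∫⁻ x in Ioi (0:ℝ), ENNReal.ofReal (p x) = 1) :
    ∫⁻ u in Ioi (0:ℝ), Qe p u = 1 := by
  have h := swap_aux hm (f := fun _ => 1) measurable_const
  simp only [one_mul] at h
  rw [h]
  have h2 : ∫⁻ v in Ioi (0:ℝ), (∫⁻ _ in Ioo 0 v, (1:ℝ≥0∞)) * ENNReal.ofReal (p v / v)
      = ∫⁻ v in Ioi (0:ℝ), ENNReal.ofReal (p v) := by
    refine setLIntegral_congr_fun measurableSet_Ioi
      (fun v hv => ?_)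
    rw [setLIntegral_one, Real.volume_Ioo, sub_zero,
      ← ENNReal.ofReal_mul (le_of_lt hv)]
    congr 1
    rw [mul_comm, div_mul_cancel₀]
    exact ne_of_gt hv
  rw [h2, h1]

lemma Q_first_moment (hm : Measurable p) :
    ∫⁻ u in Ioi (0:ℝ), ENNReal.ofReal u * Qe p u
      = ENNReal.ofReal 2⁻¹ * ∫⁻ x in Ioi (0:ℝ), ENNReal.ofReal x * ENNReal.ofReal (p x) := by
  have hfm : Measurable fun u : ℝ => ENNReal.ofReal u := by fun_prop
  have h := swap_aux hm (f := fun u => ENNReal.ofReal u) hfm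
  rw [h]
  have hKm : Measurable fun x : ℝ => ENNReal.ofReal x * ENNReal.ofReal (p x) := by fun_prop
  rw [← lintegral_const_mul _ hKm]
  refine setLIntegral_congr_fun measurableSet_Ioi
    (fun v hv => ?_)
  have hint : IntegrableOn (fun u : ℝ => u) (Ioo 0 v) :=
    (intervalIntegral.intervalIntegrable_id (a := 0) (b := v) (μ := volume)).1.mono_set
      Ioo_subset_Ioc_self
  have hval : ∫ u in Ioo (0:ℝ) v, u = v ^ 2 / 2 := by
    rw [← integral_Ioc_eq_integral_Ioo, ← intervalIntegral.integral_of_le (le_of_lt hv),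
      integral_id]
    norm_num
  have hlin : ∫⁻ u in Ioo (0:ℝ) v, ENNReal.ofReal u = ENNReal.ofReal (v ^ 2 / 2) := by
    rw [← ofReal_integral_eq_lintegral_ofReal hint
      ((ae_restrict_mem measurableSet_Ioo).mono fun u hu => le_of_lt hu.1), hval]
  rw [hlin, ← ENNReal.ofReal_mul (by positivity : (0:ℝ) ≤ v ^ 2 / 2),
    ← ENNReal.ofReal_mul (le_of_lt (show (0:ℝ) < v from hv)),
    ← ENNReal.ofReal_mul (by norm_num : (0:ℝ) ≤ 2⁻¹)]
  congr 1
  have hv0 : (v:ℝ) ≠ 0 := ne_of_gt hv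
  field_simp

/-- Translation identity. -/
lemma shift_Ici (u : ℝ) (f : ℝ → ℝ≥0∞) :
    ∫⁻ x in Ici u, f x = ∫⁻ w in Ici (0:ℝ), f (w + u) := by
  rw [← lintegral_indicator measurableSet_Ici, ← lintegral_indicator measurableSet_Ici,
    ← lintegral_add_right_eq_self (fun x => (Ici u).indicator f x) u]
  congr 1
  funext w
  simp [indicator_apply, mem_Ici, le_add_iff_nonneg_left]

lemma Be_swap (hm : Measurable p) (hQtop : ∀ u : ℝ, 0 < u → Qe p u ≠ ∞) :
    ∫⁻ x in Ioi (0:ℝ), ENNReal.ofReal x *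
        ∫⁻ u in Ioc 0 x, ENNReal.ofReal (p (x - u)) * Qe p u
      = ∫⁻ u in Ioi (0:ℝ),
          (∫⁻ x in Ici u, ENNReal.ofReal x * ENNReal.ofReal (p (x - u))) * Qe p u := by
  set F : ℝ × ℝ → ℝ≥0∞ := fun q => ({q : ℝ × ℝ | q.2 ≤ q.1}).indicator
    (fun q => ENNReal.ofReal q.1 * (ENNReal.ofReal (p (q.1 - q.2)) * Qe p q.2)) q with hF
  have hFmeas : Measurable F := by
    refine Measurable.indicator ?_ (measurableSet_le measurable_snd measurable_fst)
    exact (measurable_fst.ennreal_ofReal).mul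
      (((hm.comp (measurable_fst.sub measurable_snd)).ennreal_ofReal).mul
        (Qe_meas.comp measurable_snd))
  calc ∫⁻ x in Ioi (0:ℝ), ENNReal.ofReal x *
        ∫⁻ u in Ioc 0 x, ENNReal.ofReal (p (x - u)) * Qe p u
      = ∫⁻ x in Ioi (0:ℝ), ∫⁻ u in Ioi (0:ℝ), F (x, u) := by
        refine setLIntegral_congr_fun measurableSet_Ioi
          (fun x hx => ?_)
        have heq : (fun u => F (x, u)) = fun u => (Iic x).indicator
            (fun u => ENNReal.ofReal x *
              (ENNReal.ofReal (p (x - u)) * Qe p u)) u := by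
          funext u
          simp only [hF, indicator_apply, mem_setOf_eq, mem_Iic]
        rw [heq, setLIntegral_indicator measurableSet_Iic]
        have hset : Iic x ∩ Ioi 0 = Ioc 0 x := by
          ext y; simp only [mem_inter_iff, mem_Iic, mem_Ioi, mem_Ioc]; exact and_comm
        have hmm : Measurable fun u : ℝ =>
            ENNReal.ofReal (p (x - u)) * Qe p u := by
          have hq : Measurable (Qe p) := Qe_meas
          fun_prop
        rw [hset, lintegral_const_mul _ hmm]
    _ = ∫⁻ u in Ioi (0:ℝ), ∫⁻ x in Ioi (0:ℝ), F (x, u) := by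
        refine lintegral_lintegral_swap (Measurable.aemeasurable ?_)
        exact hFmeas.comp (measurable_fst.prodMk measurable_snd)
    _ = ∫⁻ u in Ioi (0:ℝ),
          (∫⁻ x in Ici u, ENNReal.ofReal x * ENNReal.ofReal (p (x - u))) * Qe p u := by
        refine setLIntegral_congr_fun measurableSet_Ioi
          (fun u hu => ?_)
        have heq : (fun x => F (x, u)) = fun x => (Ici u).indicator
            (fun x => (ENNReal.ofReal x * ENNReal.ofReal (p (x - u))) * Qe p u) x := by
          funext x
          simp only [hF, indicator_apply, mem_setOf_eq, mem_Ici, mul_assoc]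
        rw [heq, setLIntegral_indicator measurableSet_Ici]
        have hset : Ici u ∩ Ioi 0 = Ici u :=
          inter_eq_left.mpr fun y hy => show (0:ℝ) < y from lt_of_lt_of_le hu hy
        rw [hset, lintegral_mul_const' _ _ (hQtop u hu)]

end TMeanAux

open TMeanAux

noncomputable def T (p : ℝ → ℝ) (x : ℝ) : ℝ :=
  (1/2) * (∫ u in (0:ℝ)..x, p (x - u) * ∫ v in Ioi u, p v / v)
    + (1/2) * ∫ u in Ioi x, p u / u

theorem T_preserves_mean (p : ℝ → ℝ)
    (hint : IntegrableOn p (Ioi 0))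
    (hpos : ∀ᵐ x ∂(volume.restrict (Ioi (0:ℝ))), 0 ≤ p x)
    (hone : ∫ x in Ioi (0:ℝ), p x = 1)
    (hmean : IntegrableOn (fun x => x * p x) (Ioi 0)) :
    ∫ x in Ioi (0:ℝ), x * T p x = ∫ x in Ioi (0:ℝ), x * p x := by
  classical
  set M : ℝ := ∫ x in Ioi (0:ℝ), x * p x with hM_def
  have hsm := hint.aestronglyMeasurable
  set q : ℝ → ℝ := fun x => if 0 < x then max (hsm.mk p x) 0 else 0 with hq_def
  have hq_meas : Measurable q := by
    refine Measurable.ite measurableSet_Ioi ?_ measurable_const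
    exact hsm.stronglyMeasurable_mk.measurable.max measurable_const
  have hq_nn : ∀ x, 0 ≤ q x := fun x => by
    by_cases h : 0 < x <;> simp [hq_def, h, le_max_right]
  have hq_ae : p =ᵐ[volume.restrict (Ioi (0:ℝ))] q := by
    filter_upwards [hsm.ae_eq_mk, hpos, ae_restrict_mem measurableSet_Ioi] with x h1 h2 h3
    simp only [hq_def]
    rw [if_pos (show (0:ℝ) < x from h3), ← h1]
    exact (max_eq_left h2).symm
  have hq_int : IntegrableOn q (Ioi 0) := hint.congr hq_ae
  have hpq_mean : (fun x => x * p x) =ᵐ[volume.restrict (Ioi (0:ℝ))] fun x => x * q x :=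
    hq_ae.mono fun x hx => by dsimp; rw [hx]
  have hq_mean_int : IntegrableOn (fun x => x * q x) (Ioi 0) := hmean.congr hpq_mean
  have hS : ∫⁻ x in Ioi (0:ℝ), ENNReal.ofReal (q x) = 1 := by
    rw [← ofReal_integral_eq_lintegral_ofReal hq_int
      (Filter.Eventually.of_forall fun x => hq_nn x),
      ← integral_congr_ae hq_ae, hone, ENNReal.ofReal_one]
  set K : ℝ≥0∞ := ∫⁻ x in Ioi (0:ℝ), ENNReal.ofReal x * ENNReal.ofReal (q x) with hK_def
  have hM0 : 0 ≤ M := by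
    refine integral_nonneg_of_ae ?_
    filter_upwards [hpos, ae_restrict_mem measurableSet_Ioi] with x h1 h2
    exact mul_nonneg h2.le h1
  have hK : K = ENNReal.ofReal M := by
    rw [hK_def]
    have h1 : ∫⁻ x in Ioi (0:ℝ), ENNReal.ofReal x * ENNReal.ofReal (q x)
        = ∫⁻ x in Ioi (0:ℝ), ENNReal.ofReal (x * q x) := by
      refine setLIntegral_congr_fun measurableSet_Ioi
        (fun x hx => ?_)
      rw [ENNReal.ofReal_mul (le_of_lt hx)]
    have h2 : ∫ x in Ioi (0:ℝ), x * q x = M := (integral_congr_ae hpq_mean).symm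
    rw [h1, ← ofReal_integral_eq_lintegral_ofReal hq_mean_int
      ((ae_restrict_mem measurableSet_Ioi).mono fun x hx => mul_nonneg hx.le (hq_nn x)), h2]
  have hK_ne : K ≠ ∞ := by rw [hK]; exact ENNReal.ofReal_ne_top
  have hQ_ne : ∀ u : ℝ, 0 < u → Qe q u ≠ ∞ := fun u hu => Qe_ne_top hq_meas hq_nn hS hu
  -- pointwise description of the tail term
  have htail : ∀ x : ℝ, 0 < x → ∫ v in Ioi x, p v / v = (Qe q x).toReal := by
    intro x hx
    have hcong : ∀ᵐ v ∂volume.restrict (Ioi x), p v / v = q v / v := by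
      refine (ae_restrict_of_ae_restrict_of_subset (Ioi_subset_Ioi hx.le) hq_ae).mono ?_
      intro v hv
      rw [hv]
    have hnn : 0 ≤ᵐ[volume.restrict (Ioi x)] fun v => q v / v := by
      filter_upwards [ae_restrict_mem measurableSet_Ioi] with v hv
      exact div_nonneg (hq_nn v) (le_of_lt (hx.trans hv))
    rw [integral_congr_ae hcong,
      integral_eq_lintegral_of_nonneg_ae hnn ((hq_meas.div measurable_id).aestronglyMeasurable)]
    rfl
  set Ae : ℝ → ℝ≥0∞ := fun x => ∫⁻ u in Ioc 0 x, ENNReal.ofReal (q (x - u)) * Qe q u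
    with hAe_def
  have hAe_meas : Measurable Ae := by
    have hrep : Ae = fun x => ∫⁻ u, ({r : ℝ × ℝ | 0 < r.2 ∧ r.2 ≤ r.1}.indicator
        (fun r => ENNReal.ofReal (q (r.1 - r.2)) * Qe q r.2)) (x, u) := by
      funext x
      rw [hAe_def]
      dsimp only
      rw [← lintegral_indicator measurableSet_Ioc]
      refine lintegral_congr fun u => ?_
      simp only [indicator_apply, mem_Ioc, mem_setOf_eq]
    rw [hrep]
    refine Measurable.lintegral_prod_right ?_
    refine Measurable.indicator ?_ ?_
    · exact ((hq_meas.comp (measurable_fst.sub measurable_snd)).ennreal_ofReal.mul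
        (Qe_meas.comp measurable_snd))
    · exact (measurableSet_lt measurable_const measurable_snd).inter
        (measurableSet_le measurable_snd measurable_fst)
  -- pointwise description of the integrand
  have hT_eq : ∀ x ∈ Ioi (0:ℝ), x * T p x
      = x * ((1/2) * (Ae x).toReal + (1/2) * (Qe q x).toReal) := by
    intro x hx
    have hx0 : (0:ℝ) < x := hx
    have hA : (∫ u in (0:ℝ)..x, p (x - u) * ∫ v in Ioi u, p v / v) = (Ae x).toReal := by
      rw [intervalIntegral.integral_of_le hx0.le]
      have hnull : volume ({y | ¬ p y = q y} ∩ Ioi 0) = 0 := by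
        have h := hq_ae
        rw [Filter.EventuallyEq, ae_iff, Measure.restrict_apply' measurableSet_Ioi] at h
        exact h
      have hae1 : ∀ᵐ u ∂volume.restrict (Ioc 0 x), p (x - u) = q (x - u) := by
        rw [ae_iff, Measure.restrict_apply' measurableSet_Ioc]
        have hsub : {u | ¬ p (x - u) = q (x - u)} ∩ Ioc 0 x
            ⊆ ((fun u => x - u) ⁻¹' ({y | ¬ p y = q y} ∩ Ioi 0)) ∪ {x} := by
          rintro u ⟨hu1, hu2⟩
          rcases eq_or_lt_of_le hu2.2 with h | h
          · exact Or.inr (by simp [h])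
          · exact Or.inl ⟨hu1, by simp only [mem_Ioi]; linarith⟩
        have hmp : MeasurePreserving (fun u : ℝ => x - u) volume volume := by
          have h1 : (fun u : ℝ => x - u) = (fun t : ℝ => x + t) ∘ fun u : ℝ => -u :=
            funext fun u => sub_eq_add_neg x u
          rw [h1]
          exact (measurePreserving_add_left volume x).comp
            (Measure.measurePreserving_neg volume)
        have hpre : volume ((fun u : ℝ => x - u) ⁻¹' ({y | ¬ p y = q y} ∩ Ioi 0)) = 0 :=
          hmp.quasiMeasurePreserving.preimage_null hnull
        exact measure_mono_null hsub (measure_union_null hpre (measure_singleton x))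
      have hcong2 : ∀ᵐ u ∂volume.restrict (Ioc 0 x),
          p (x - u) * (∫ v in Ioi u, p v / v) = q (x - u) * (Qe q u).toReal := by
        filter_upwards [hae1, ae_restrict_mem measurableSet_Ioc] with u h1 h2
        rw [h1, htail u h2.1]
      have hnn : 0 ≤ᵐ[volume.restrict (Ioc 0 x)] fun u => q (x - u) * (Qe q u).toReal :=
        Filter.Eventually.of_forall fun u => mul_nonneg (hq_nn _) ENNReal.toReal_nonneg
      have hms : AEStronglyMeasurable (fun u => q (x - u) * (Qe q u).toReal)
          (volume.restrict (Ioc 0 x)) :=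
        ((hq_meas.comp (measurable_const.sub measurable_id)).mul
          Qe_meas.ennreal_toReal).aestronglyMeasurable
      rw [integral_congr_ae hcong2, integral_eq_lintegral_of_nonneg_ae hnn hms, hAe_def]
      congr 1
      refine setLIntegral_congr_fun measurableSet_Ioc
        (fun u hu => ?_)
      rw [ENNReal.ofReal_mul (hq_nn _), ENNReal.ofReal_toReal (hQ_ne u hu.1)]
    have hR : (∫ u in Ioi x, p u / u) = (Qe q x).toReal := htail x hx0
    simp only [T]
    rw [hA, hR]
  rw [setIntegral_congr_fun measurableSet_Ioi fun x hx => hT_eq x hx]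
  set F : ℝ → ℝ := fun x => x * ((1/2) * (Ae x).toReal + (1/2) * (Qe q x).toReal) with hF_def
  have hF_meas : Measurable F := by
    rw [hF_def]
    exact measurable_id.mul ((measurable_const.mul hAe_meas.ennreal_toReal).add
      (measurable_const.mul Qe_meas.ennreal_toReal))
  have hF_nn : 0 ≤ᵐ[volume.restrict (Ioi (0:ℝ))] F := by
    filter_upwards [ae_restrict_mem measurableSet_Ioi] with x hx
    exact mul_nonneg hx.le (add_nonneg
      (mul_nonneg (by norm_num) ENNReal.toReal_nonneg)
      (mul_nonneg (by norm_num) ENNReal.toReal_nonneg))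
  rw [integral_eq_lintegral_of_nonneg_ae hF_nn hF_meas.aestronglyMeasurable]
  -- the convolution double-integral identity
  have hBe : ∫⁻ x in Ioi (0:ℝ), ENNReal.ofReal x * Ae x = K + ENNReal.ofReal 2⁻¹ * K := by
    rw [hAe_def]
    dsimp only
    rw [Be_swap hq_meas hQ_ne]
    have hinner : ∀ u ∈ Ioi (0:ℝ),
        (∫⁻ x in Ici u, ENNReal.ofReal x * ENNReal.ofReal (q (x - u))) * Qe q u
          = (K + ENNReal.ofReal u) * Qe q u := by
      intro u hu
      congr 1
      rw [shift_Ici u (fun x => ENNReal.ofReal x * ENNReal.ofReal (q (x - u)))]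
      simp only [add_sub_cancel_right]
      rw [← setLIntegral_congr (Ioi_ae_eq_Ici (a := (0:ℝ)))]
      have hsplit : ∀ w ∈ Ioi (0:ℝ), ENNReal.ofReal (w + u) * ENNReal.ofReal (q w)
          = ENNReal.ofReal w * ENNReal.ofReal (q w) + ENNReal.ofReal u * ENNReal.ofReal (q w) := by
        intro w hw
        rw [ENNReal.ofReal_add (le_of_lt hw) (le_of_lt hu), add_mul]
      have hm1 : Measurable fun w : ℝ => ENNReal.ofReal w * ENNReal.ofReal (q w) := by
        fun_prop
      have hm2 : Measurable fun w : ℝ => ENNReal.ofReal (q w) := by fun_prop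
      rw [setLIntegral_congr_fun measurableSet_Ioi hsplit,
        lintegral_add_left hm1 _, lintegral_const_mul _ hm2, hS, mul_one, hK_def]
    rw [setLIntegral_congr_fun measurableSet_Ioi hinner]
    have hm3 : Measurable fun u : ℝ => K * Qe q u := (Qe_meas (p := q)).const_mul K
    have hdist : ∀ u : ℝ, (K + ENNReal.ofReal u) * Qe q u
        = K * Qe q u + ENNReal.ofReal u * Qe q u := fun u => add_mul _ _ _
    rw [lintegral_congr fun u => hdist u, lintegral_add_left hm3 _,
      lintegral_const_mul K (Qe_meas (p := q)), Q_total hq_meas hS, mul_one,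
      Q_first_moment hq_meas, ← hK_def]
  have hL2 : ∫⁻ x in Ioi (0:ℝ), ENNReal.ofReal x * Qe q x = ENNReal.ofReal 2⁻¹ * K := by
    rw [Q_first_moment hq_meas, ← hK_def]
  -- a.e. finiteness of Ae on Ioi 0
  have hAe_fin : ∀ᵐ x ∂volume.restrict (Ioi (0:ℝ)), Ae x ≠ ∞ := by
    have hmeas : Measurable fun x : ℝ => ENNReal.ofReal x * Ae x :=
      measurable_id.ennreal_ofReal.mul hAe_meas
    have hne : ∫⁻ x in Ioi (0:ℝ), ENNReal.ofReal x * Ae x ≠ ∞ := by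
      rw [hBe]
      exact ENNReal.add_ne_top.mpr ⟨hK_ne, ENNReal.mul_ne_top ENNReal.ofReal_ne_top hK_ne⟩
    have hlt := ae_lt_top hmeas hne
    filter_upwards [hlt, ae_restrict_mem measurableSet_Ioi] with x h1 h2
    intro hcontra
    have hx0 : ENNReal.ofReal x ≠ 0 := by
      simp only [ne_eq, ENNReal.ofReal_eq_zero, not_le]
      exact h2
    rw [hcontra, ENNReal.mul_top hx0] at h1
    exact lt_irrefl _ h1
  -- the final lintegral computation
  have hmain : ∫⁻ x in Ioi (0:ℝ), ENNReal.ofReal (F x)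
      = ENNReal.ofReal 2⁻¹ * (K + ENNReal.ofReal 2⁻¹ * K)
        + ENNReal.ofReal 2⁻¹ * (ENNReal.ofReal 2⁻¹ * K) := by
    have hcong : ∫⁻ x in Ioi (0:ℝ), ENNReal.ofReal (F x)
        = ∫⁻ x in Ioi (0:ℝ), (ENNReal.ofReal 2⁻¹ * (ENNReal.ofReal x * Ae x)
          + ENNReal.ofReal 2⁻¹ * (ENNReal.ofReal x * Qe q x)) := by
      refine lintegral_congr_ae ?_
      filter_upwards [hAe_fin, ae_restrict_mem measurableSet_Ioi] with x h1 h2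
      rw [hF_def]
      dsimp only
      rw [ENNReal.ofReal_mul h2.le,
        ENNReal.ofReal_add (mul_nonneg (by norm_num) ENNReal.toReal_nonneg)
          (mul_nonneg (by norm_num) ENNReal.toReal_nonneg),
        ENNReal.ofReal_mul (by norm_num : (0:ℝ) ≤ 1/2),
        ENNReal.ofReal_mul (by norm_num : (0:ℝ) ≤ 1/2),
        ENNReal.ofReal_toReal h1, ENNReal.ofReal_toReal (hQ_ne x h2)]
      have h12 : ENNReal.ofReal (1/2 : ℝ) = ENNReal.ofReal 2⁻¹ := by norm_num
      rw [h12]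
      ring
    have hm1 : Measurable fun x : ℝ =>
        ENNReal.ofReal 2⁻¹ * (ENNReal.ofReal x * Ae x) :=
      (measurable_id.ennreal_ofReal.mul hAe_meas).const_mul _
    have hm2 : Measurable fun x : ℝ => ENNReal.ofReal x * Ae x :=
      measurable_id.ennreal_ofReal.mul hAe_meas
    have hm3 : Measurable fun x : ℝ => ENNReal.ofReal x * Qe q x :=
      measurable_id.ennreal_ofReal.mul (Qe_meas (p := q))
    rw [hcong, lintegral_add_left hm1 _, lintegral_const_mul _ hm2,
      lintegral_const_mul _ hm3, hBe, hL2]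
  rw [hmain]
  have hc : ENNReal.ofReal 2⁻¹ * (K + ENNReal.ofReal 2⁻¹ * K)
      + ENNReal.ofReal 2⁻¹ * (ENNReal.ofReal 2⁻¹ * K) = K := by
    have h2 : ENNReal.ofReal 2⁻¹ * ENNReal.ofReal 2⁻¹ = ENNReal.ofReal 4⁻¹ := by
      rw [← ENNReal.ofReal_mul (by norm_num)]
      norm_num
    have hx : ENNReal.ofReal 2⁻¹ * (K + ENNReal.ofReal 2⁻¹ * K)
        + ENNReal.ofReal 2⁻¹ * (ENNReal.ofReal 2⁻¹ * K)
        = (ENNReal.ofReal 2⁻¹ + (ENNReal.ofReal 4⁻¹ + ENNReal.ofReal 4⁻¹)) * K := by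
      rw [← h2]
      ring
    rw [hx, ← ENNReal.ofReal_add (by norm_num) (by norm_num),
      ← ENNReal.ofReal_add (by norm_num) (by norm_num)]
    norm_num
  rw [hc, hK, ENNReal.toReal_ofReal hM0]
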